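/- Let R be a commutative Noetherian ring and a ⊆ R an ideal. If U is an acyclic (everywhere exact) complex of injective R-modules, then the complex Γ_a(U), obtained by applying the a-torsion functor degreewise, is again an acyclic complex of injective R-modules. -/

import Mathlib

open CategoryTheory CategoryTheory.Limits

universe u

variable (R : Type u) [CommRing R]

/-- The `a`-torsion submodule `Γ_a(M) = {x ∈ M | aⁿ x = 0 for some n}`. -/
def aTorsion (a : Ideal R) (M : Type u) [AddCommGroup M] [Module R M] : Submodule R M where
  carrier := {x | ∃ n : ℕ, ∀ r ∈ a ^ n, r • x = 0}
  zero_mem' := ⟨0, fun r _ => smul_zero r⟩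
  add_mem' := by
    intro x y hx hy
    obtain ⟨n, hn⟩ := hx
    obtain ⟨m, hm⟩ := hy
    exact ⟨n + m, fun r hr => by
      rw [smul_add, hn r (Ideal.pow_le_pow_right (Nat.le_add_right n m) hr),
        hm r (Ideal.pow_le_pow_right (Nat.le_add_left m n) hr), add_zero]⟩
  smul_mem' := by
    intro c x hx
    obtain ⟨n, hn⟩ := hx
    exact ⟨n, fun r hr => by rw [smul_comm, hn r hr, smul_zero]⟩

/-- Functoriality of the `a`-torsion submodule. -/
def aTorsionMap (a : Ideal R) {M N : Type u} [AddCommGroup M] [Module R M]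
    [AddCommGroup N] [Module R N] (f : M →ₗ[R] N) :
    aTorsion R a M →ₗ[R] aTorsion R a N :=
  f.restrict (p := aTorsion R a M) (q := aTorsion R a N) (fun x hx => by
    obtain ⟨n, hn⟩ := hx
    exact ⟨n, fun r hr => by rw [← map_smul, hn r hr, map_zero]⟩)

/-- The `a`-torsion functor `Γ_a : Mod R → Mod R`. -/
def torsionFunctor (a : Ideal R) : ModuleCat.{u} R ⥤ ModuleCat.{u} R where
  obj M := ModuleCat.of R (aTorsion R a M)
  map f := ModuleCat.ofHom (aTorsionMap R a f.hom)
  map_id := by intros; ext; rfl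
  map_comp := by intros; ext; rfl

instance (a : Ideal R) : (torsionFunctor R a).Additive where
  map_add := by intros; ext x; apply Subtype.ext; rfl

/-- The `a`-torsion functor applied degreewise to a cochain complex. -/
def torsionCpx (a : Ideal R) (U : CochainComplex (ModuleCat.{u} R) ℤ) :
    CochainComplex (ModuleCat.{u} R) ℤ :=
  ((torsionFunctor R a).mapHomologicalComplex (ComplexShape.up ℤ)).obj U


/-- A totally acyclic complex of injective modules. -/
structure IsTotallyAcyclicInjCpx (U : CochainComplex (ModuleCat.{u} R) ℤ) : Prop where
  inj : ∀ i : ℤ, Injective (U.X i)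
  acyclic : ∀ i : ℤ, U.ExactAt i
  hom_acyclic : ∀ (J : ModuleCat.{u} R), Injective J → ∀ (i : ℤ) (g : J ⟶ U.X i),
    g ≫ U.d i (i + 1) = 0 → ∃ h : J ⟶ U.X (i - 1), h ≫ U.d (i - 1) i = g

/-- `ι : M ⟶ I.X 0` is an injective resolution of `M` (with `I` a ℤ-indexed cochain
complex vanishing in negative degrees). -/
structure IsInjRes (M : ModuleCat.{u} R) (I : CochainComplex (ModuleCat.{u} R) ℤ)
    (ι : M ⟶ I.X 0) : Prop where
  inj : ∀ i : ℤ, Injective (I.X i)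
  zero_neg : ∀ i < (0 : ℤ), IsZero (I.X i)
  mono : Function.Injective ι
  exact_zero : LinearMap.range ι.hom = LinearMap.ker (I.d 0 1).hom
  exact_pos : ∀ i > (0 : ℤ), I.ExactAt i

/-- A complete injective resolution of `M`. -/
structure IsCompleteInjRes (M : ModuleCat.{u} R) (I U : CochainComplex (ModuleCat.{u} R) ℤ)
    (ι : M ⟶ I.X 0) (ν : I ⟶ U) : Prop where
  res : IsInjRes R M I ι
  totAcyclic : IsTotallyAcyclicInjCpx R U
  iso_ge : ∃ n : ℤ, ∀ i ≥ n, IsIso (ν.f i)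

/-- A complex is minimal if every self homotopy equivalence is an isomorphism. -/
def IsMinimalCpx (C : CochainComplex (ModuleCat.{u} R) ℤ) : Prop :=
  ∀ e : HomotopyEquiv C C, IsIso e.hom

/-- The data of a minimal complete injective resolution of `M`. -/
structure MinCIR (M : ModuleCat.{u} R) where
  I : CochainComplex (ModuleCat.{u} R) ℤ
  U : CochainComplex (ModuleCat.{u} R) ℤ
  ι : M ⟶ I.X 0
  ν : I ⟶ U
  complete : IsCompleteInjRes R M I U ι ν
  minI : IsMinimalCpx R I
  minU : IsMinimalCpx R U

/-- The stable local cohomology module `Γ^stab_a(M) = Z⁰(Γ_a(U))` computed from a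
totally acyclic complex `U` (the complete injective resolution of `M`). -/
def stabLC (a : Ideal R) (U : CochainComplex (ModuleCat.{u} R) ℤ) : ModuleCat.{u} R :=
  ModuleCat.of R (LinearMap.ker ((torsionCpx R a U).d 0 1).hom)

/-- A Gorenstein injective module: a cycle of a totally acyclic complex of injectives. -/
def GorensteinInjective (G : ModuleCat.{u} R) : Prop :=
  ∃ U : CochainComplex (ModuleCat.{u} R) ℤ, IsTotallyAcyclicInjCpx R U ∧
    Nonempty (G ≃ₗ[R] LinearMap.ker (U.d 0 1).hom)

/-- Isomorphism in the stable category of Gorenstein injective modules: `X ⊕ J₁ ≅ Y ⊕ J₂`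
for some injective modules `J₁`, `J₂`. -/
def StablyIsomorphic (X Y : ModuleCat.{u} R) : Prop :=
  ∃ J₁ J₂ : ModuleCat.{u} R, Injective J₁ ∧ Injective J₂ ∧
    Nonempty ((X × J₁) ≃ₗ[R] (Y × J₂))

/-- `M` has injective dimension at most `n`. -/
def InjDimLE (M : ModuleCat.{u} R) (n : ℕ) : Prop :=
  ∃ (I : CochainComplex (ModuleCat.{u} R) ℤ) (ι : M ⟶ I.X 0),
    IsInjRes R M I ι ∧ ∀ i : ℤ, i > (n : ℤ) → IsZero (I.X i)

/-- `M` has finite injective dimension. -/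
def FiniteInjDim (M : ModuleCat.{u} R) : Prop := ∃ n : ℕ, InjDimLE R M n

/-- A Gorenstein ring: commutative Noetherian and every localization at a prime has finite
self-injective dimension. -/
def IsGorensteinRing : Prop :=
  IsNoetherianRing R ∧ ∀ (p : Ideal R) (hp : p.IsPrime),
    haveI := hp
    FiniteInjDim (Localization.AtPrime p)
      (ModuleCat.of (Localization.AtPrime p) (Localization.AtPrime p))

namespace TorsionAux

open CategoryTheory Submodule

variable {R : Type u} [CommRing R]

lemma aTorsion_map_mem {a : Ideal R} {M N : Type u} [AddCommGroup M] [Module R M]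
    [AddCommGroup N] [Module R N] (f : M →ₗ[R] N) {x : M} (hx : x ∈ aTorsion R a M) :
    f x ∈ aTorsion R a N := by
  obtain ⟨n, hn⟩ := hx
  exact ⟨n, fun r hr => by rw [← map_smul, hn r hr, map_zero]⟩

lemma exists_uniform_kill (a : Ideal R) {M : Type u} [AddCommGroup M]
    [Module R M] (S : Submodule R M) (hfg : S.FG) (hS : S ≤ aTorsion R a M) :
    ∃ n : ℕ, ∀ x ∈ S, ∀ r ∈ a ^ n, r • x = 0 := by
  obtain ⟨s, rfl⟩ := hfg
  classical
  have key : ∀ t : Finset M, (↑t : Set M) ⊆ (aTorsion R a M : Set M) →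
      ∃ n : ℕ, ∀ x ∈ t, ∀ r ∈ a ^ n, r • x = 0 := by
    intro t
    induction t using Finset.induction_on with
    | empty => exact fun _ => ⟨0, by simp⟩
    | @insert y t hy ih =>
      intro hsub
      obtain ⟨n1, h1⟩ : y ∈ aTorsion R a M := hsub (by simp)
      obtain ⟨n2, h2⟩ := ih (fun m hm => hsub (by simp [hm]))
      refine ⟨max n1 n2, fun m hm r hr => ?_⟩
      rcases Finset.mem_insert.mp hm with rfl | hm'
      · exact h1 r (Ideal.pow_le_pow_right (le_max_left n1 n2) hr)
      · exact h2 m hm' r (Ideal.pow_le_pow_right (le_max_right n1 n2) hr)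
  obtain ⟨n, hn⟩ := key s (fun m hm => hS (subset_span hm))
  let K : Submodule R M :=
    { carrier := {x | ∀ r ∈ a ^ n, r • x = 0}
      zero_mem' := fun r _ => smul_zero r
      add_mem' := fun hx hy r hr => by
        rw [smul_add, hx r hr, hy r hr, add_zero]
      smul_mem' := fun c x hx r hr => by rw [smul_comm, hx r hr, smul_zero] }
  have hle : span R (↑s : Set M) ≤ K := span_le.mpr (fun m hm r hr => hn m hm r hr)
  exact ⟨n, fun x hx r hr => hle hx r hr⟩

lemma aTorsion_baer [IsNoetherianRing R] (a : Ideal R) (J : Type u) [AddCommGroup J]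
    [Module R J] (hJ : Module.Baer R J) : Module.Baer R (aTorsion R a J) := by
  intro I g
  haveI : Module.Finite R ↥I := Module.Finite.iff_fg.mpr (IsNoetherian.noetherian I)
  have hfg : (LinearMap.range ((aTorsion R a J).subtype ∘ₗ g)).FG := by
    rw [LinearMap.range_eq_map]
    exact Submodule.FG.map _ Module.Finite.fg_top
  obtain ⟨n, hn⟩ := exists_uniform_kill a _ hfg
    (by rintro _ ⟨x, rfl⟩; exact (g x).2)
  have hkill : ∀ x : ↥I, ∀ r ∈ a ^ n, r • ((g x : J)) = 0 :=
    fun x r hr => hn _ ⟨x, rfl⟩ r hr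
  obtain ⟨k, hk⟩ := Ideal.exists_pow_inf_eq_pow_smul a I
  set m := k + n with hm
  have har : a ^ m • (⊤ : Submodule R R) ⊓ I ≤ a ^ n • I := by
    rw [hk m (Nat.le_add_right k n)]
    rw [show m - k = n by omega]
    exact Submodule.smul_mono le_rfl inf_le_right
  have hzero : ∀ x : ↥I, (x : R) ∈ a ^ m → g x = 0 := by
    intro x hx
    have h1 : (x : R) ∈ a ^ m • (⊤ : Submodule R R) := by
      simpa [smul_eq_mul] using Submodule.smul_mem_smul hx (Submodule.mem_top (x := (1 : R)))
    have hx' : (x : R) ∈ a ^ n • I := har ⟨h1, x.2⟩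
    have main : ∀ y ∈ a ^ n • I, ∃ hy : y ∈ I, g ⟨y, hy⟩ = 0 := by
      intro y hy
      refine Submodule.smul_induction_on hy ?_ ?_
      · intro r hr z hz
        refine ⟨I.smul_mem r hz, ?_⟩
        have e1 : (⟨r • z, I.smul_mem r hz⟩ : ↥I) = r • (⟨z, hz⟩ : ↥I) := rfl
        rw [e1, map_smul]
        exact Subtype.ext (hkill ⟨z, hz⟩ r hr)
      · rintro y1 y2 ⟨hy1, e1⟩ ⟨hy2, e2⟩
        refine ⟨add_mem hy1 hy2, ?_⟩
        have e3 : (⟨y1 + y2, add_mem hy1 hy2⟩ : ↥I) = (⟨y1, hy1⟩ : ↥I) + ⟨y2, hy2⟩ := rfl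
        rw [e3, map_add, e1, e2, add_zero]
    obtain ⟨hyI, e⟩ := main (x : R) hx'
    rwa [show (⟨(x : R), hyI⟩ : ↥I) = x from Subtype.ext rfl] at e
  set K : Ideal R := a ^ m with hK
  have hker : Submodule.comap I.subtype (I ⊓ K) ≤ LinearMap.ker g := by
    intro x hx
    exact hzero x hx.2
  set gbar := Submodule.liftQ _ g hker with hgbar
  set e := LinearMap.quotientInfEquivSupQuotient I K with he
  set F : ↥(I ⊔ K) →ₗ[R] J :=
    (aTorsion R a J).subtype ∘ₗ gbar ∘ₗ e.symm.toLinearMap ∘ₗ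
      (Submodule.comap (I ⊔ K).subtype K).mkQ with hF
  obtain ⟨G, hG⟩ := hJ (I ⊔ K) F
  set y := G 1 with hy
  have hGr : ∀ r : R, G r = r • y := fun r => by
    rw [hy, ← map_smul, smul_eq_mul, mul_one]
  have hFI : ∀ (r : R) (hr : r ∈ I), F ⟨r, (le_sup_left : I ≤ I ⊔ K) hr⟩
      = ((g ⟨r, hr⟩ : aTorsion R a J) : J) := by
    intro r hr
    simp only [hF, LinearMap.comp_apply, LinearEquiv.coe_coe, Submodule.coe_subtype,
      Submodule.mkQ_apply]
    have h0 : e.symm (Submodule.Quotient.mk ⟨r, (le_sup_left : I ≤ I ⊔ K) hr⟩)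
        = Submodule.Quotient.mk ⟨r, hr⟩ :=
      LinearMap.quotientInfEquivSupQuotient_symm_apply_left I K ⟨r, (le_sup_left : I ≤ I ⊔ K) hr⟩ hr
    change ((gbar (e.symm (Submodule.Quotient.mk ⟨r, (le_sup_left : I ≤ I ⊔ K) hr⟩)) : aTorsion R a J) : J) = _
    rw [h0]
    exact congrArg Subtype.val (Submodule.liftQ_apply _ g ⟨r, hr⟩)
  have hFK : ∀ (c : R) (hc : c ∈ K), F ⟨c, (le_sup_right : K ≤ I ⊔ K) hc⟩ = 0 := by
    intro c hc
    simp only [hF, LinearMap.comp_apply, LinearEquiv.coe_coe, Submodule.coe_subtype,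
      Submodule.mkQ_apply]
    have h0 : e.symm (Submodule.Quotient.mk ⟨c, (le_sup_right : K ≤ I ⊔ K) hc⟩) = 0 :=
      LinearMap.quotientInfEquivSupQuotient_symm_apply_right I K hc
    change ((gbar (e.symm (Submodule.Quotient.mk ⟨c, (le_sup_right : K ≤ I ⊔ K) hc⟩)) : aTorsion R a J) : J) = _
    rw [h0]
    simp
    exact map_zero gbar
  have hyT : y ∈ aTorsion R a J := by
    refine ⟨m, fun c hc => ?_⟩
    rw [← hGr c, hG c ((le_sup_right : K ≤ I ⊔ K) (hK ▸ hc)), hFK c (hK ▸ hc)]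
  refine ⟨LinearMap.toSpanSingleton R _ (⟨y, hyT⟩ : aTorsion R a J), fun r hr => ?_⟩
  apply Subtype.ext
  show r • y = ((g ⟨r, hr⟩ : aTorsion R a J) : J)
  rw [← hGr r, hG r ((le_sup_left : I ≤ I ⊔ K) hr), hFI r hr]

lemma baer_divide {Q : Type u} [AddCommGroup Q] [Module R Q] (hQ : Module.Baer R Q)
    (u : Q) (y c : R) (h : ∀ r : R, r * y = 0 → r * c = 0) : ∃ v : Q, y • v = c • u := by
  set p := LinearMap.toSpanSingleton R R y with hp
  have hker : LinearMap.ker p ≤ LinearMap.ker (LinearMap.toSpanSingleton R Q (c • u)) := by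
    intro r hr
    have h1 : r * y = 0 := by
      simpa [hp, LinearMap.toSpanSingleton_apply, smul_eq_mul] using hr
    show r • (c • u) = 0
    rw [smul_smul, h r h1, zero_smul]
  set fbar := Submodule.liftQ _ _ hker with hfbar
  set e := p.quotKerEquivRange with he
  have hrange : Ideal.span {y} = LinearMap.range p := LinearMap.span_singleton_eq_range R R y
  set g : ↥(Ideal.span {y}) →ₗ[R] Q :=
    fbar ∘ₗ e.symm.toLinearMap ∘ₗ (LinearEquiv.ofEq _ _ hrange).toLinearMap with hg
  obtain ⟨G, hG⟩ := hQ (Ideal.span {y}) g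
  refine ⟨G 1, ?_⟩
  have h1 : y • G 1 = G y := by rw [← map_smul, smul_eq_mul, mul_one]
  rw [h1, hG y (Ideal.mem_span_singleton_self y)]
  simp only [hg, LinearMap.comp_apply, LinearEquiv.coe_coe]
  have h2 : (LinearEquiv.ofEq _ _ hrange) ⟨y, Ideal.mem_span_singleton_self y⟩
      = ⟨p 1, LinearMap.mem_range_self p 1⟩ := by
    apply Subtype.ext
    simp [hp, LinearMap.toSpanSingleton_apply]
  rw [h2]
  have h3 : e.symm ⟨p 1, LinearMap.mem_range_self p 1⟩ = Submodule.Quotient.mk 1 := by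
    apply e.injective
    rw [LinearEquiv.apply_symm_apply]
    exact Subtype.ext (p.quotKerEquivRange_apply_mk 1).symm
  rw [h3, hfbar, Submodule.liftQ_apply]
  simp [LinearMap.toSpanSingleton_apply]

lemma ann_stab [IsNoetherianRing R] (x : R) :
    ∃ N : ℕ, ∀ j ≥ N, ∀ r : R, r * x ^ j = 0 → r * x ^ N = 0 := by
  have hmono : Monotone (fun j => LinearMap.ker (LinearMap.toSpanSingleton R R (x ^ j))) := by
    intro i j hij r hr
    have h1 : r • x ^ i = 0 := hr
    show r • x ^ j = 0
    have h2 : x ^ j = x ^ i * x ^ (j - i) := by rw [← pow_add, Nat.add_sub_cancel' hij]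
    rw [smul_eq_mul] at h1 ⊢
    rw [h2, ← mul_assoc, h1, zero_mul]
  obtain ⟨N, hN⟩ := monotone_stabilizes_iff_noetherian.mpr inferInstance
    ⟨fun j => LinearMap.ker (LinearMap.toSpanSingleton R R (x ^ j)), hmono⟩
  refine ⟨N, fun j hj r hr => ?_⟩
  have h1 : r ∈ LinearMap.ker (LinearMap.toSpanSingleton R R (x ^ j)) := by
    simpa [LinearMap.mem_ker, LinearMap.toSpanSingleton_apply, smul_eq_mul] using hr
  have h2 := hN j hj
  simp only [OrderHom.coe_mk] at h2
  rw [← h2] at h1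
  simpa [LinearMap.mem_ker, LinearMap.toSpanSingleton_apply, smul_eq_mul] using h1

lemma exact_elem (U : CochainComplex (ModuleCat.{u} R) ℤ) (hac : ∀ i : ℤ, U.ExactAt i)
    (i : ℤ) (z : U.X i) (hz : U.d i (i + 1) z = 0) : ∃ w : U.X (i - 1), U.d (i - 1) i w = z := by
  have h := (HomologicalComplex.exactAt_iff' U (i - 1) i (i + 1) (CochainComplex.prev ℤ i)
    (CochainComplex.next ℤ i)).mp (hac i)
  exact (ShortComplex.moduleCat_exact_iff _).mp h z hz

lemma torsion_exact_elem [IsNoetherianRing R] (U : CochainComplex (ModuleCat.{u} R) ℤ)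
    (hinj : ∀ i : ℤ, Injective (U.X i)) (hac : ∀ i : ℤ, U.ExactAt i) (L : List R) :
    ∀ (i : ℤ) (z : U.X i), z ∈ aTorsion R (Ideal.span {r | r ∈ L}) (U.X i) →
      U.d i (i + 1) z = 0 →
      ∃ w : U.X (i - 1), w ∈ aTorsion R (Ideal.span {r | r ∈ L}) (U.X (i - 1)) ∧
        U.d (i - 1) i w = z := by
  induction L with
  | nil =>
    intro i z _ hdz
    obtain ⟨w, hw⟩ := exact_elem U hac i z hdz
    refine ⟨w, ⟨1, fun r hr => ?_⟩, hw⟩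
    rw [pow_one] at hr
    rw [show {r : R | r ∈ ([] : List R)} = (∅ : Set R) from by ext r; simp,
      Ideal.span_empty] at hr
    rw [show r = 0 from hr, zero_smul]
  | cons x L ih =>
    intro i z hz hdz
    have hsets : {r : R | r ∈ x :: L} = insert x {r : R | r ∈ L} := by ext r; simp
    set b := Ideal.span {r : R | r ∈ L} with hb
    have hsub : b ≤ Ideal.span {r : R | r ∈ x :: L} :=
      Ideal.span_mono (fun r hr => by simp only [Set.mem_setOf_eq, List.mem_cons]; exact Or.inr hr)
    have hxmem : x ∈ Ideal.span {r : R | r ∈ x :: L} := Ideal.subset_span (by simp)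
    obtain ⟨n0, hn0⟩ := hz
    have hxz : x ^ n0 • z = 0 := hn0 _ (Ideal.pow_mem_pow hxmem n0)
    have hzb : z ∈ aTorsion R b (U.X i) :=
      ⟨n0, fun r hr => hn0 r (Ideal.pow_right_mono hsub n0 hr)⟩
    obtain ⟨w0, hw0b, hw0⟩ := ih i z hzb hdz
    have hz'b : x ^ n0 • w0 ∈ aTorsion R b (U.X (i - 1)) := Submodule.smul_mem _ _ hw0b
    have hdz' : U.d (i - 1) (i - 1 + 1) (x ^ n0 • w0) = 0 := by
      rw [show i - 1 + 1 = i from by ring]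
      rw [map_smul, hw0, hxz]
    obtain ⟨u, hub, hdu⟩ := ih (i - 1) (x ^ n0 • w0) hz'b hdz'
    obtain ⟨N, hN⟩ := ann_stab (R := R) x
    have hbaer : Module.Baer R (aTorsion R b (U.X (i - 1 - 1))) := by
      apply aTorsion_baer
      exact Module.Baer.of_injective (Module.injective_module_of_injective_object R (U.X (i - 1 - 1))
        (inj := show CategoryTheory.Injective (ModuleCat.of R (U.X (i - 1 - 1))) from hinj _))
    obtain ⟨v, hv⟩ := baer_divide hbaer (⟨u, hub⟩ : aTorsion R b (U.X (i - 1 - 1)))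
      (x ^ (N + n0)) (x ^ N) (fun r hr => hN (N + n0) (Nat.le_add_right N n0) r hr)
    have hv' : x ^ (N + n0) • (v : U.X (i - 1 - 1)) = x ^ N • u := congrArg Subtype.val hv
    refine ⟨w0 - U.d (i - 1 - 1) (i - 1) (v : U.X (i - 1 - 1)), ?_, ?_⟩
    · have h1 : w0 - U.d (i - 1 - 1) (i - 1) (v : U.X (i - 1 - 1)) ∈ aTorsion R b (U.X (i - 1)) :=
        Submodule.sub_mem _ hw0b (aTorsion_map_mem (U.d (i - 1 - 1) (i - 1)).hom v.2)
      have h2 : x ^ (N + n0) • (w0 - U.d (i - 1 - 1) (i - 1) (v : U.X (i - 1 - 1))) = 0 := by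
        rw [smul_sub, ← map_smul, hv', map_smul, hdu, smul_smul, ← pow_add]
        exact sub_self _
      obtain ⟨nb, hnb⟩ := h1
      refine ⟨(N + n0) + nb, fun r hr => ?_⟩
      rw [hsets, Ideal.span_insert] at hr
      have hr' : r ∈ Ideal.span {x} ^ (N + n0) ⊔ b ^ nb :=
        Ideal.sup_pow_add_le_pow_sup_pow hr
      obtain ⟨r1, hr1, r2, hr2, rfl⟩ := Submodule.mem_sup.mp hr'
      rw [Ideal.span_singleton_pow, Ideal.mem_span_singleton] at hr1
      obtain ⟨t, rfl⟩ := hr1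
      rw [add_smul, mul_comm, mul_smul, h2, smul_zero, hnb r2 hr2, add_zero]
    · rw [map_sub, hw0]
      have hdd : U.d (i - 1) i (U.d (i - 1 - 1) (i - 1) (v : U.X (i - 1 - 1))) = 0 := by
        have h := LinearMap.congr_fun (congrArg ModuleCat.Hom.hom (U.d_comp_d (i - 1 - 1) (i - 1) i)) (v : U.X (i - 1 - 1))
        simpa only [ModuleCat.hom_comp, LinearMap.comp_apply, ModuleCat.hom_zero, LinearMap.zero_apply] using h
      rw [hdd, sub_zero]

end TorsionAux


/-- Over a commutative Noetherian ring, applying the `a`-torsion functor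
degreewise to an acyclic complex of injective modules yields again an acyclic complex of
injective modules. -/
theorem torsionCpx_of_acyclic_injectives (R : Type u) [CommRing R] [IsNoetherianRing R]
    (a : Ideal R) (U : CochainComplex (ModuleCat.{u} R) ℤ)
    (hinj : ∀ i : ℤ, Injective (U.X i)) (hac : ∀ i : ℤ, U.ExactAt i) :
    (∀ i : ℤ, Injective ((torsionCpx R a U).X i)) ∧ (∀ i : ℤ, (torsionCpx R a U).ExactAt i) := by
  constructor
  · intro i
    have hb : Module.Baer R (aTorsion R a ((U.X i : Type u))) :=
      TorsionAux.aTorsion_baer a _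
        (Module.Baer.of_injective (Module.injective_module_of_injective_object R (U.X i)
          (inj := show CategoryTheory.Injective (ModuleCat.of R (U.X i)) from hinj i)))
    exact Module.injective_object_of_injective_module R _ (inj := hb.injective)
  · intro i
    rw [HomologicalComplex.exactAt_iff' _ (i - 1) i (i + 1) (CochainComplex.prev ℤ i) (CochainComplex.next ℤ i),
      ShortComplex.moduleCat_exact_iff]
    intro z hz
    obtain ⟨T, hT⟩ := IsNoetherian.noetherian (R := R) (M := R) a
    have ha : Ideal.span {r : R | r ∈ T.toList} = a := by
      rw [show {r : R | r ∈ T.toList} = (↑T : Set R) from by ext r; simp]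
      exact hT
    have hz' : U.d i (i + 1) (z : aTorsion R a (U.X i)).1 = 0 := congrArg Subtype.val hz
    obtain ⟨w, hwmem, hw⟩ := TorsionAux.torsion_exact_elem U hinj hac T.toList i
      (z : aTorsion R a (U.X i)).1 (by rw [ha]; exact (z : aTorsion R a (U.X i)).2) hz'
    refine ⟨⟨w, by rw [← ha]; exact hwmem⟩, ?_⟩
    exact Subtype.ext hw
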